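/- (Theorem 3: general exactness condition with multiple negative-price blocks.) Consider the storage scheduling LP with η < 1 and the assumption (1−ρ)·S_ub ≤ Δt·η^C·P^C_max. Write the horizon as an alternating sequence of positive-price blocks of lengths p_j and strictly-negative-price blocks of lengths n_j, j = 1, …, J. Define recursively Ŝ_0 = S^init and Ŝ_j = ρ^{n_j}·max{ρ^{p_j}·Ŝ_{j−1} − Δt·(1/η^D)·P^D_max·Σ_{t=1}^{p_j} ρ^{p_j−t}, S_lb} + Δt·η^C·P^C_max·Σ_{t=1}^{n_j} ρ^{n_j−t}. If Ŝ_j ≤ S_ub for all j = 1, …, J, then the linear relaxation is exact: there exists an optimal solution of the LP with no simultaneous charge and discharge. -/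

import Mathlib

open Finset

def feasible (T : ℕ) (Δt ρ ηC ηD Slb Sub Sinit PC PD : ℝ)
    (s pC pD : ℕ → ℝ) : Prop :=
  s 0 = Sinit ∧
  (∀ t ∈ Icc 1 T, s t = ρ * s (t - 1) + Δt * (ηC * pC t - (1 / ηD) * pD t)) ∧
  (∀ t ∈ Icc 1 T, Slb ≤ s t ∧ s t ≤ Sub) ∧
  (∀ t ∈ Icc 1 T, 0 ≤ pC t ∧ pC t ≤ PC) ∧
  (∀ t ∈ Icc 1 T, 0 ≤ pD t ∧ pD t ≤ PD)

def objective (T : ℕ) (Δt : ℝ) (C : ℕ → ℝ) (pC pD : ℕ → ℝ) : ℝ :=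
  ∑ t ∈ Icc 1 T, Δt * C t * (pD t - pC t)

def optimal (T : ℕ) (Δt ρ ηC ηD Slb Sub Sinit PC PD : ℝ) (C : ℕ → ℝ)
    (s pC pD : ℕ → ℝ) : Prop :=
  feasible T Δt ρ ηC ηD Slb Sub Sinit PC PD s pC pD ∧
  ∀ s' pC' pD', feasible T Δt ρ ηC ηD Slb Sub Sinit PC PD s' pC' pD' →
    objective T Δt C pC' pD' ≤ objective T Δt C pC pD

def bnd (p n : ℕ → ℕ) : ℕ → ℕ
  | 0 => 0
  | j + 1 => bnd p n j + p (j + 1) + n (j + 1)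

noncomputable def Shat (Δt ρ ηC ηD Slb PC PD Sinit : ℝ) (p n : ℕ → ℕ) : ℕ → ℝ
  | 0 => Sinit
  | j + 1 =>
      ρ ^ n (j + 1) *
        max (ρ ^ p (j + 1) * Shat Δt ρ ηC ηD Slb PC PD Sinit p n j -
          Δt * (1 / ηD) * PD * ∑ t ∈ Icc 1 (p (j + 1)), ρ ^ (p (j + 1) - t)) Slb +
      Δt * ηC * PC * ∑ t ∈ Icc 1 (n (j + 1)), ρ ^ (n (j + 1) - t)



noncomputable def stf (Δt ρ ηC ηD Sinit : ℝ) (u v : ℕ → ℝ) : ℕ → ℝ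
  | 0 => Sinit
  | t+1 => ρ * stf Δt ρ ηC ηD Sinit u v t + Δt * (ηC * u (t+1) - (1/ηD) * v (t+1))

open Classical in
noncomputable def ngb (p n : ℕ → ℕ) (J : ℕ) (t : ℕ) : Bool :=
  decide (∃ j, 1 ≤ j ∧ j ≤ J ∧ bnd p n (j-1) + p j < t ∧ t ≤ bnd p n j)

section A
variable (Δt ρ ηC ηD Slb Sub Sinit PC PD : ℝ) (T : ℕ) (ng : ℕ → Bool) (pc pd s : ℕ → ℝ)

noncomputable def fmx (t : ℕ) : ℝ :=
  if ng t then Δt * ηC * PC else Δt * (ηC * max (pc t - pd t) 0 - max (pd t - pc t) 0 / ηD)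

noncomputable def Wa : ℕ → ℝ
  | 0 => Slb
  | k+1 => max Slb ((Wa k - fmx Δt ηC ηD PC ng pc pd (T - k)) / ρ)

noncomputable def Wf (t : ℕ) : ℝ := Wa Δt ρ ηC ηD Slb PC T ng pc pd (T - t)

noncomputable def ssf : ℕ → ℝ
  | 0 => Sinit
  | t+1 => if ng (t+1) then
      max (max (ρ * ssf t + Δt * ηC * (pc (t+1) - pd (t+1)))
        (Wf Δt ρ ηC ηD Slb PC T ng pc pd (t+1))) (ρ * ssf t)
    else max (ρ * ssf t - Δt * PD / ηD) (Wf Δt ρ ηC ηD Slb PC T ng pc pd (t+1))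

noncomputable def Ffn (t : ℕ) : ℝ :=
  ssf Δt ρ ηC ηD Slb Sinit PC PD T ng pc pd t - ρ * ssf Δt ρ ηC ηD Slb Sinit PC PD T ng pc pd (t-1)

noncomputable def pCn (t : ℕ) : ℝ := max (Ffn Δt ρ ηC ηD Slb Sinit PC PD T ng pc pd t) 0 / (Δt * ηC)

noncomputable def pDn (t : ℕ) : ℝ := ηD * max (-(Ffn Δt ρ ηC ηD Slb Sinit PC PD T ng pc pd t)) 0 / Δt

local notation "W" => Wf Δt ρ ηC ηD Slb PC T ng pc pd
local notation "SS" => ssf Δt ρ ηC ηD Slb Sinit PC PD T ng pc pd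
local notation "FM" => fmx Δt ηC ηD PC ng pc pd
local notation "FF" => Ffn Δt ρ ηC ηD Slb Sinit PC PD T ng pc pd

lemma Wa_ge (k : ℕ) : Slb ≤ Wa Δt ρ ηC ηD Slb PC T ng pc pd k := by
  cases k <;> simp [Wa]

lemma Wf_ge (t : ℕ) : Slb ≤ W t := Wa_ge ..

lemma Wf_succ {t : ℕ} (h : t < T) :
    W t = max Slb ((W (t+1) - FM (t+1)) / ρ) := by
  have h1 : T - t = (T - (t+1)) + 1 := by omega
  have h2 : T - (T - (t+1)) = t + 1 := by omega
  rw [Wf, h1, Wa, h2]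
  rfl

lemma Wf_step_lower (hρ0 : 0 < ρ) {t : ℕ} (h : t < T) :
    W (t+1) - FM (t+1) ≤ ρ * W t := by
  have h2 := Wf_succ Δt ρ ηC ηD Slb PC T ng pc pd h
  have h3 : (W (t+1) - FM (t+1)) / ρ ≤ W t := h2 ▸ le_max_right _ _
  calc W (t+1) - FM (t+1) = ρ * ((W (t+1) - FM (t+1)) / ρ) := by field_simp
  _ ≤ ρ * W t := by nlinarith

lemma Wf_step_upper (hρ0 : 0 < ρ) {t : ℕ} (h : t < T) :
    ρ * W t ≤ max (ρ * Slb) (W (t+1) - FM (t+1)) := by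
  rw [Wf_succ Δt ρ ηC ηD Slb PC T ng pc pd h, mul_max_of_nonneg _ _ hρ0.le]
  have hx : ρ * ((W (t+1) - FM (t+1)) / ρ) = W (t+1) - FM (t+1) := by field_simp
  rw [hx]


-- fmx bounds; boxes at the given time
lemma fmx_ge_negd (hΔt : 0 < Δt) (hηC0 : 0 < ηC) (hηD0 : 0 < ηD) (hPD : 0 ≤ PD) (hPC : 0 ≤ PC)
    {t : ℕ} (hpc : 0 ≤ pc t) (hpd : pd t ≤ PD) :
    -(Δt * PD / ηD) ≤ FM t := by
  have hd0 : 0 ≤ Δt * PD / ηD := by positivity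
  rw [fmx]
  rcases hb : ng t with _ | _
  · simp only [Bool.false_eq_true, if_false]
    have h1 : max (pd t - pc t) 0 ≤ PD := max_le (by linarith) hPD
    have h2 : (0:ℝ) ≤ ηC * max (pc t - pd t) 0 := by positivity
    have h3 : max (pd t - pc t) 0 / ηD ≤ PD / ηD := by gcongr
    have h4 : Δt * (0 - PD / ηD) ≤ Δt * (ηC * max (pc t - pd t) 0 - max (pd t - pc t) 0 / ηD) := by
      apply mul_le_mul_of_nonneg_left (by linarith) hΔt.le
    calc -(Δt * PD / ηD) = Δt * (0 - PD/ηD) := by ring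
    _ ≤ _ := h4
  · simp only [if_pos]
    have : (0:ℝ) ≤ Δt * ηC * PC := by positivity
    linarith

lemma fmx_le_c (hΔt : 0 < Δt) (hηC0 : 0 < ηC) (hηD0 : 0 < ηD) (hPC : 0 ≤ PC)
    {t : ℕ} (hpc : pc t ≤ PC) (hpd : 0 ≤ pd t) :
    FM t ≤ Δt * ηC * PC := by
  rw [fmx]
  rcases hb : ng t with _ | _
  · simp only [Bool.false_eq_true, if_false]
    have h1 : max (pc t - pd t) 0 ≤ PC := max_le (by linarith) hPC
    have h2 : (0:ℝ) ≤ max (pd t - pc t) 0 / ηD := by positivity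
    nlinarith [mul_pos hΔt hηC0, hΔt.le, hηC0.le]
  · simp

lemma fmx_ge_flow (hΔt : 0 < Δt) (hηC0 : 0 < ηC) (hηD0 : 0 < ηD) (hη : ηC * ηD ≤ 1)
    {t : ℕ} (hpc0 : 0 ≤ pc t) (hpc1 : pc t ≤ PC) (hpd0 : 0 ≤ pd t) :
    Δt * (ηC * pc t - (1/ηD) * pd t) ≤ FM t := by
  have hkey : ηC ≤ 1/ηD := by
    rw [le_div_iff₀ hηD0]; linarith
  rw [fmx]
  rcases hb : ng t with _ | _
  · simp only [Bool.false_eq_true, if_false]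
    rcases le_total (pd t) (pc t) with hle | hle
    · have h1 : max (pc t - pd t) 0 = pc t - pd t := max_eq_left (by linarith)
      have h2 : max (pd t - pc t) 0 = 0 := max_eq_right (by linarith)
      rw [h1, h2, zero_div]
      have h5 : 0 ≤ Δt * pd t * (1/ηD - ηC) :=
        mul_nonneg (mul_nonneg hΔt.le hpd0) (by linarith)
      nlinarith [h5]
    · have h1 : max (pc t - pd t) 0 = 0 := max_eq_right (by linarith)
      have h2 : max (pd t - pc t) 0 = pd t - pc t := max_eq_left (by linarith)
      rw [h1, h2]
      have h5 : 0 ≤ Δt * pc t * (1/ηD - ηC) :=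
        mul_nonneg (mul_nonneg hΔt.le hpc0) (by linarith)
      have h6 : (pd t - pc t)/ηD = (1/ηD)*(pd t - pc t) := by ring
      rw [h6]
      nlinarith [h5]
  · simp only [if_pos]
    have h7 : 0 ≤ Δt * ((1/ηD) * pd t) := by positivity
    have h8 : Δt * (ηC * pc t) ≤ Δt * (ηC * PC) := by gcongr
    nlinarith [h7, h8]

-- W ≤ s given feasibility of (s, pc, pd)
lemma Wa_le_s (hΔt : 0 < Δt) (hρ0 : 0 < ρ) (hηC0 : 0 < ηC) (hηD0 : 0 < ηD)
    (hη : ηC * ηD ≤ 1) (hinit0 : Slb ≤ Sinit)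
    (hs0 : s 0 = Sinit)
    (hsrec : ∀ t ∈ Icc 1 T, s t = ρ * s (t-1) + Δt * (ηC * pc t - (1/ηD) * pd t))
    (hsb : ∀ t ∈ Icc 1 T, Slb ≤ s t ∧ s t ≤ Sub)
    (hpcb : ∀ t ∈ Icc 1 T, 0 ≤ pc t ∧ pc t ≤ PC)
    (hpdb : ∀ t ∈ Icc 1 T, 0 ≤ pd t ∧ pd t ≤ PD) :
    ∀ k, k ≤ T → Wa Δt ρ ηC ηD Slb PC T ng pc pd k ≤ s (T - k) := by
  intro k
  induction k with
  | zero =>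
    intro _
    simp only [Nat.sub_zero, Wa]
    rcases Nat.eq_zero_or_pos T with h | h
    · rw [h, hs0]; exact hinit0
    · exact (hsb T (by simp; omega)).1
  | succ k ih =>
    intro hk
    have hk' : k ≤ T := by omega
    have hmem : T - k ∈ Icc 1 T := by simp; omega
    have hflow := fmx_ge_flow Δt ηC ηD PC ng pc pd hΔt hηC0 hηD0 hη
      (hpcb _ hmem).1 (hpcb _ hmem).2 (hpdb _ hmem).1
    rw [Wa]
    apply max_le
    · rcases Nat.eq_zero_or_pos (T - (k+1)) with h | h
      · rw [h, hs0]; exact hinit0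
      · exact (hsb _ (by simp; omega)).1
    · rw [div_le_iff₀ hρ0]
      have h1 : Wa Δt ρ ηC ηD Slb PC T ng pc pd k ≤ s (T - k) := ih hk'
      have h2 : s (T - k) = ρ * s (T - k - 1) + Δt * (ηC * pc (T-k) - (1/ηD) * pd (T-k)) :=
        hsrec _ hmem
      have h3 : T - k - 1 = T - (k+1) := by omega
      rw [h3] at h2
      nlinarith [hflow]

lemma Wf_le_s (hΔt : 0 < Δt) (hρ0 : 0 < ρ) (hηC0 : 0 < ηC) (hηD0 : 0 < ηD)
    (hη : ηC * ηD ≤ 1) (hinit0 : Slb ≤ Sinit)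
    (hs0 : s 0 = Sinit)
    (hsrec : ∀ t ∈ Icc 1 T, s t = ρ * s (t-1) + Δt * (ηC * pc t - (1/ηD) * pd t))
    (hsb : ∀ t ∈ Icc 1 T, Slb ≤ s t ∧ s t ≤ Sub)
    (hpcb : ∀ t ∈ Icc 1 T, 0 ≤ pc t ∧ pc t ≤ PC)
    (hpdb : ∀ t ∈ Icc 1 T, 0 ≤ pd t ∧ pd t ≤ PD) :
    ∀ t, t ≤ T → W t ≤ s t := by
  intro t ht
  have := Wa_le_s Δt ρ ηC ηD Slb Sub Sinit PC PD T ng pc pd s hΔt hρ0 hηC0 hηD0 hη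
    hinit0 hs0 hsrec hsb hpcb hpdb (T - t) (by omega)
  rwa [show T - (T - t) = t by omega] at this

-- list feasibility hypotheses bundle used repeatedly
lemma ss_ge_Wf (hΔt : 0 < Δt) (hρ0 : 0 < ρ) (hηC0 : 0 < ηC) (hηD0 : 0 < ηD)
    (hη : ηC * ηD ≤ 1) (hinit0 : Slb ≤ Sinit)
    (hs0 : s 0 = Sinit)
    (hsrec : ∀ t ∈ Icc 1 T, s t = ρ * s (t-1) + Δt * (ηC * pc t - (1/ηD) * pd t))
    (hsb : ∀ t ∈ Icc 1 T, Slb ≤ s t ∧ s t ≤ Sub)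
    (hpcb : ∀ t ∈ Icc 1 T, 0 ≤ pc t ∧ pc t ≤ PC)
    (hpdb : ∀ t ∈ Icc 1 T, 0 ≤ pd t ∧ pd t ≤ PD) :
    ∀ t, t ≤ T → W t ≤ SS t := by
  intro t ht
  cases t with
  | zero =>
    have h := Wf_le_s Δt ρ ηC ηD Slb Sub Sinit PC PD T ng pc pd s hΔt hρ0 hηC0 hηD0 hη
      hinit0 hs0 hsrec hsb hpcb hpdb 0 (by omega)
    rw [hs0] at h
    exact h
  | succ t =>
    rw [ssf]
    rcases hng : ng (t+1) with _ | _
    · simp only [Bool.false_eq_true, if_false]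
      exact le_max_right _ _
    · simp only [if_pos]
      exact le_trans (le_max_right _ _) (le_max_left _ _)

lemma Ffn_succ (t : ℕ) : FF (t+1) = SS (t+1) - ρ * SS t := by
  rw [Ffn]; norm_num

lemma ss_ge_Slb (t : ℕ) (ht : 1 ≤ t) : Slb ≤ SS t := by
  obtain ⟨k, rfl⟩ : ∃ k, t = k + 1 := ⟨t - 1, by omega⟩
  have h1 : Slb ≤ W (k+1) := Wf_ge ..
  rw [ssf]
  rcases hng : ng (k+1) with _ | _
  · simp only [Bool.false_eq_true, if_false]
    exact le_trans h1 (le_max_right _ _)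
  · simp only [if_pos]
    exact le_trans (le_trans h1 (le_max_right _ _)) (le_max_left _ _)

lemma F_le_fm (hΔt : 0 < Δt) (hρ0 : 0 < ρ) (hηC0 : 0 < ηC) (hηD0 : 0 < ηD)
    (hη : ηC * ηD ≤ 1) (hPD : 0 ≤ PD) (hPC : 0 ≤ PC) (hinit0 : Slb ≤ Sinit)
    (hs0 : s 0 = Sinit)
    (hsrec : ∀ t ∈ Icc 1 T, s t = ρ * s (t-1) + Δt * (ηC * pc t - (1/ηD) * pd t))
    (hsb : ∀ t ∈ Icc 1 T, Slb ≤ s t ∧ s t ≤ Sub)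
    (hpcb : ∀ t ∈ Icc 1 T, 0 ≤ pc t ∧ pc t ≤ PC)
    (hpdb : ∀ t ∈ Icc 1 T, 0 ≤ pd t ∧ pd t ≤ PD)
    {t : ℕ} (ht : t + 1 ≤ T) :
    FF (t+1) ≤ FM (t+1) := by
  have hmem : t + 1 ∈ Icc 1 T := by simp; omega
  have hw : W t ≤ SS t := ss_ge_Wf Δt ρ ηC ηD Slb Sub Sinit PC PD T ng pc pd s hΔt hρ0 hηC0
    hηD0 hη hinit0 hs0 hsrec hsb hpcb hpdb t (by omega)
  have hlow : W (t+1) - FM (t+1) ≤ ρ * W t :=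
    Wf_step_lower Δt ρ ηC ηD Slb PC T ng pc pd hρ0 (by omega)
  have hmono : ρ * W t ≤ ρ * SS t := by nlinarith
  have h2 : W (t+1) - ρ * SS t ≤ FM (t+1) := by linarith
  have hnegd := fmx_ge_negd Δt ηC ηD PC PD ng pc pd hΔt hηC0 hηD0 hPD hPC
    (hpcb _ hmem).1 (hpdb _ hmem).2
  rw [Ffn_succ, ssf]
  rcases hng : ng (t+1) with _ | _
  · simp only [Bool.false_eq_true, if_false]
    rcases max_cases (ρ * SS t - Δt * PD / ηD) (W (t+1)) with ⟨he, _⟩ | ⟨he, _⟩ <;> rw [he] <;>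
      linarith
  · have hfm : FM (t+1) = Δt * ηC * PC := by rw [fmx, if_pos hng]
    have harg1 : Δt * ηC * (pc (t+1) - pd (t+1)) ≤ Δt * ηC * PC := by
      have := (hpcb _ hmem).2
      have := (hpdb _ hmem).1
      nlinarith [mul_pos hΔt hηC0]
    have hc0 : (0:ℝ) ≤ Δt * ηC * PC := by positivity
    simp only [if_pos]
    rw [hfm]
    rcases max_cases (max (ρ * SS t + Δt * ηC * (pc (t+1) - pd (t+1))) (W (t+1))) (ρ * SS t)
      with ⟨he, _⟩ | ⟨he, _⟩
    · rw [he]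
      rcases max_cases (ρ * SS t + Δt * ηC * (pc (t+1) - pd (t+1))) (W (t+1)) with
        ⟨he2, _⟩ | ⟨he2, _⟩ <;> rw [he2] <;> rw [hfm] at h2 <;> linarith
    · rw [he]; linarith

lemma F_ge_negd (hΔt : 0 < Δt) (hηD0 : 0 < ηD) (hPD : 0 ≤ PD) {t : ℕ} :
    -(Δt * PD / ηD) ≤ FF (t+1) := by
  have hd0 : 0 ≤ Δt * PD / ηD := by positivity
  rw [Ffn_succ, ssf]
  rcases hng : ng (t+1) with _ | _
  · simp only [Bool.false_eq_true, if_false]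
    have := le_max_left (ρ * SS t - Δt * PD / ηD) (W (t+1))
    linarith
  · simp only [if_pos]
    have := le_max_right (max (ρ * SS t + Δt * ηC * (pc (t+1) - pd (t+1))) (W (t+1))) (ρ * SS t)
    linarith

lemma F_neg_nonneg {t : ℕ} (hng : ng (t+1) = true) : 0 ≤ FF (t+1) := by
  rw [Ffn_succ, ssf, if_pos hng]
  have := le_max_right (max (ρ * SS t + Δt * ηC * (pc (t+1) - pd (t+1))) (W (t+1))) (ρ * SS t)
  linarith

lemma F_neg_ge {t : ℕ} (hng : ng (t+1) = true) :
    Δt * ηC * (pc (t+1) - pd (t+1)) ≤ FF (t+1) := by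
  rw [Ffn_succ, ssf, if_pos hng]
  have := le_trans (le_max_left (ρ * SS t + Δt * ηC * (pc (t+1) - pd (t+1))) (W (t+1)))
    (le_max_left _ (ρ * SS t))
  linarith

lemma ss_rec (hΔt : 0 < Δt) (hηC0 : 0 < ηC) (hηD0 : 0 < ηD) (t : ℕ) :
    SS (t+1) = ρ * SS t +
      Δt * (ηC * pCn Δt ρ ηC ηD Slb Sinit PC PD T ng pc pd (t+1) -
        (1/ηD) * pDn Δt ρ ηC ηD Slb Sinit PC PD T ng pc pd (t+1)) := by
  have h1 : Δt * (ηC * pCn Δt ρ ηC ηD Slb Sinit PC PD T ng pc pd (t+1) -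
      (1/ηD) * pDn Δt ρ ηC ηD Slb Sinit PC PD T ng pc pd (t+1)) =
      max (FF (t+1)) 0 - max (-(FF (t+1))) 0 := by
    have hm := max_zero_sub_max_neg_zero_eq_self (FF (t+1))
    rw [pCn, pDn]
    field_simp
  rw [h1, max_zero_sub_max_neg_zero_eq_self, Ffn_succ]
  ring

local notation "PCN" => pCn Δt ρ ηC ηD Slb Sinit PC PD T ng pc pd
local notation "PDN" => pDn Δt ρ ηC ηD Slb Sinit PC PD T ng pc pd

lemma pCn_nonneg (hΔt : 0 < Δt) (hηC0 : 0 < ηC) (t : ℕ) : 0 ≤ PCN t := by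
  rw [pCn]; positivity

lemma pDn_nonneg (hΔt : 0 < Δt) (hηD0 : 0 < ηD) (t : ℕ) : 0 ≤ PDN t := by
  rw [pDn]; positivity

lemma pCn_le (hΔt : 0 < Δt) (hηC0 : 0 < ηC) (hPC : 0 ≤ PC) {t : ℕ}
    (hFc : FF t ≤ Δt * ηC * PC) : PCN t ≤ PC := by
  rw [pCn, div_le_iff₀ (by positivity)]
  have h1 : max (FF t) 0 ≤ Δt * ηC * PC := max_le hFc (by positivity)
  calc max (FF t) 0 ≤ Δt * ηC * PC := h1
  _ = PC * (Δt * ηC) := by ring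

lemma pDn_le (hΔt : 0 < Δt) (hηD0 : 0 < ηD) (hPD : 0 ≤ PD) {t : ℕ}
    (hFd : -(Δt * PD / ηD) ≤ FF t) : PDN t ≤ PD := by
  rw [pDn]
  rw [div_le_iff₀ hΔt]
  have h1 : max (-(FF t)) 0 ≤ Δt * PD / ηD :=
    max_le (by linarith) (by positivity)
  calc ηD * max (-(FF t)) 0 ≤ ηD * (Δt * PD / ηD) := by nlinarith
  _ = PD * Δt := by field_simp

lemma obj_pt_pos (hΔt : 0 < Δt) (hρ0 : 0 < ρ) (hηC0 : 0 < ηC) (hηD0 : 0 < ηD)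
    (hη : ηC * ηD ≤ 1) (hPD : 0 ≤ PD) (hPC : 0 ≤ PC) (hinit0 : Slb ≤ Sinit)
    (hs0 : s 0 = Sinit)
    (hsrec : ∀ t ∈ Icc 1 T, s t = ρ * s (t-1) + Δt * (ηC * pc t - (1/ηD) * pd t))
    (hsb : ∀ t ∈ Icc 1 T, Slb ≤ s t ∧ s t ≤ Sub)
    (hpcb : ∀ t ∈ Icc 1 T, 0 ≤ pc t ∧ pc t ≤ PC)
    (hpdb : ∀ t ∈ Icc 1 T, 0 ≤ pd t ∧ pd t ≤ PD)
    {t : ℕ} (ht : t + 1 ≤ T) (hng : ng (t+1) = false) :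
    pd (t+1) - pc (t+1) ≤ PDN (t+1) - PCN (t+1) := by
  have hF := F_le_fm Δt ρ ηC ηD Slb Sub Sinit PC PD T ng pc pd s hΔt hρ0 hηC0 hηD0 hη hPD hPC
    hinit0 hs0 hsrec hsb hpcb hpdb ht
  have hfm : FM (t+1) =
      Δt * (ηC * max (pc (t+1) - pd (t+1)) 0 - max (pd (t+1) - pc (t+1)) 0 / ηD) := by
    rw [fmx, hng]; simp
  rcases le_or_gt 0 (FF (t+1)) with hF0 | hF0
  · have hpD : PDN (t+1) = 0 := by
      rw [pDn, max_eq_right (by linarith)]; simp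
    have hpC : PCN (t+1) = FF (t+1) / (Δt*ηC) := by rw [pCn, max_eq_left hF0]
    rcases le_or_gt (pd (t+1)) (pc (t+1)) with hle | hle
    · have hfm2 : FM (t+1) = Δt * ηC * (pc (t+1) - pd (t+1)) := by
        rw [hfm, max_eq_left (by linarith), max_eq_right (by linarith)]; ring
      rw [hpD, hpC]
      have h2 : FF (t+1) / (Δt*ηC) ≤ pc (t+1) - pd (t+1) := by
        rw [div_le_iff₀ (by positivity)]
        nlinarith [hF, hfm2]
      linarith
    · exfalso
      have hfm2 : FM (t+1) = -(Δt * (pd (t+1) - pc (t+1)) / ηD) := by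
        rw [hfm, max_eq_right (by linarith), max_eq_left (by linarith)]; ring
      have : 0 < Δt * (pd (t+1) - pc (t+1)) / ηD := by
        apply div_pos (by nlinarith) hηD0
      linarith [hF, hfm2 ▸ hF]
  · have hpC : PCN (t+1) = 0 := by
      rw [pCn, max_eq_right (by linarith)]; simp
    have hpD : PDN (t+1) = ηD * (-(FF (t+1))) / Δt := by
      rw [pDn, max_eq_left (by linarith)]
    rcases le_or_gt (pd (t+1)) (pc (t+1)) with hle | hle
    · have h3 : 0 ≤ ηD * (-(FF (t+1))) / Δt := by
        apply div_nonneg _ hΔt.le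
        nlinarith
      rw [hpC, hpD]; linarith
    · have hfm2 : FM (t+1) = -(Δt * (pd (t+1) - pc (t+1)) / ηD) := by
        rw [hfm, max_eq_right (by linarith), max_eq_left (by linarith)]; ring
      rw [hpC, hpD, sub_zero, le_div_iff₀ hΔt]
      have h2 : Δt * (pd (t+1) - pc (t+1)) / ηD ≤ -(FF (t+1)) := by
        rw [hfm2] at hF; linarith
      rw [div_le_iff₀ hηD0] at h2
      nlinarith [h2]

lemma obj_pt_neg (hΔt : 0 < Δt) (hηC0 : 0 < ηC) (hηD0 : 0 < ηD)
    {t : ℕ} (hng : ng (t+1) = true) :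
    PDN (t+1) - PCN (t+1) ≤ pd (t+1) - pc (t+1) := by
  have hF0 := F_neg_nonneg Δt ρ ηC ηD Slb Sinit PC PD T ng pc pd hng
  have hFg := F_neg_ge Δt ρ ηC ηD Slb Sinit PC PD T ng pc pd hng
  have hpD : PDN (t+1) = 0 := by
    rw [pDn, max_eq_right (by linarith)]; simp
  have hpC : PCN (t+1) = FF (t+1) / (Δt*ηC) := by rw [pCn, max_eq_left hF0]
  rw [hpD, hpC]
  have h2 : pc (t+1) - pd (t+1) ≤ FF (t+1) / (Δt*ηC) := by
    rw [le_div_iff₀ (by positivity)]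
    nlinarith [hFg]
  linarith

-- geometric sums
lemma gs_nonneg (hρ0 : 0 < ρ) (k : ℕ) : 0 ≤ ∑ i ∈ range k, ρ^i := by
  apply Finset.sum_nonneg; intro i _; positivity

lemma sIcc_eq (m : ℕ) : ∑ t ∈ Icc 1 m, ρ^(m-t) = ∑ i ∈ range m, ρ^i := by
  induction m with
  | zero => simp
  | succ m ih =>
    rw [Finset.sum_Icc_succ_top (by omega), geom_sum_succ]
    have h1 : ∀ t ∈ Icc 1 m, ρ^(m+1-t) = ρ * ρ^(m-t) := by
      intro t htm
      simp only [mem_Icc] at htm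
      rw [show m+1-t = (m-t)+1 by omega, pow_succ]
      ring
    rw [Finset.sum_congr rfl h1, ← Finset.mul_sum, ih]
    simp

variable (p n : ℕ → ℕ) (J : ℕ)

lemma Shat_succ (j : ℕ) :
    Shat Δt ρ ηC ηD Slb PC PD Sinit p n (j+1) =
      ρ ^ n (j+1) * max (ρ ^ p (j+1) * Shat Δt ρ ηC ηD Slb PC PD Sinit p n j -
        (Δt * PD / ηD) * ∑ i ∈ range (p (j+1)), ρ^i) Slb +
      (Δt * ηC * PC) * ∑ i ∈ range (n (j+1)), ρ^i := by
  rw [Shat, sIcc_eq, sIcc_eq]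
  have h1 : Δt * (1/ηD) * PD = Δt * PD / ηD := by ring
  rw [h1]

lemma lift_ge_Slb (hρ0 : 0 < ρ) (hρ1 : ρ ≤ 1) (hS0 : 0 ≤ Slb)
    (hc : (1-ρ) * Slb ≤ Δt * ηC * PC) {v : ℝ} (hv : Slb ≤ v) :
    ∀ m : ℕ, Slb ≤ ρ^m * v + (Δt * ηC * PC) * ∑ i ∈ range m, ρ^i := by
  intro m
  induction m with
  | zero => simpa using hv
  | succ m ih =>
    rw [pow_succ, geom_sum_succ]
    nlinarith [ih]

lemma Shat_ge_Slb (hρ0 : 0 < ρ) (hρ1 : ρ ≤ 1) (hS0 : 0 ≤ Slb)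
    (hc : (1-ρ) * Slb ≤ Δt * ηC * PC) (hinit0 : Slb ≤ Sinit) :
    ∀ j, Slb ≤ Shat Δt ρ ηC ηD Slb PC PD Sinit p n j := by
  intro j
  induction j with
  | zero => exact hinit0
  | succ j ih =>
    rw [Shat_succ]
    exact lift_ge_Slb (Δt := Δt) (ρ := ρ) (ηC := ηC) (Slb := Slb) (PC := PC)
      hρ0 hρ1 hS0 hc (le_max_right _ _) (n (j+1))

lemma qlem (hρ0 : 0 < ρ) (hρ1 : ρ ≤ 1) {u0 c : ℝ} (hc0 : 0 ≤ c) (hq : (1-ρ) * u0 ≤ c) :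
    ∀ k : ℕ, (1-ρ) * (ρ^k * u0 + c * ∑ i ∈ range k, ρ^i) ≤ c := by
  intro k
  induction k with
  | zero => simpa using hq
  | succ k ih =>
    rw [pow_succ, geom_sum_succ]
    nlinarith [ih]

lemma u_mono (hρ0 : 0 < ρ) (hρ1 : ρ ≤ 1) {u0 c : ℝ} (hc0 : 0 ≤ c) (hq : (1-ρ) * u0 ≤ c)
    {k m : ℕ} (hkm : k ≤ m) :
    ρ^k * u0 + c * ∑ i ∈ range k, ρ^i ≤ ρ^m * u0 + c * ∑ i ∈ range m, ρ^i := by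
  have hstep : ∀ a, ρ^a * u0 + c * ∑ i ∈ range a, ρ^i ≤
      ρ^(a+1) * u0 + c * ∑ i ∈ range (a+1), ρ^i := by
    intro a
    have := qlem (ρ := ρ) hρ0 hρ1 hc0 hq a
    rw [pow_succ, geom_sum_succ]
    nlinarith
  exact monotone_nat_of_le_succ hstep hkm

lemma bnd_mono : Monotone (bnd p n) := by
  apply monotone_nat_of_le_succ
  intro j
  rw [bnd]
  omega

lemma bnd_decomp {j : ℕ} (hj : 1 ≤ j) :
    bnd p n j = bnd p n (j-1) + p j + n j := by
  obtain ⟨k, rfl⟩ : ∃ k, j = k + 1 := ⟨j - 1, by omega⟩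
  rw [bnd]
  simp

lemma ngb_true_iff (t : ℕ) : ngb p n J t = true ↔
    ∃ j, 1 ≤ j ∧ j ≤ J ∧ bnd p n (j-1) + p j < t ∧ t ≤ bnd p n j := by
  simp [ngb]

lemma ngb_false_of {j t : ℕ} (hj1 : 1 ≤ j) (hjJ : j ≤ J)
    (h1 : bnd p n (j-1) < t) (h2 : t ≤ bnd p n (j-1) + p j) :
    ngb p n J t = false := by
  rw [← Bool.not_eq_true, ngb_true_iff]
  rintro ⟨j', hj'1, hj'J, hA, hB⟩
  rcases lt_trichotomy j' j with h | h | h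
  · have : bnd p n j' ≤ bnd p n (j-1) := bnd_mono p n (by omega)
    omega
  · subst h
    omega
  · have h3 : bnd p n j ≤ bnd p n (j'-1) := bnd_mono p n (by omega)
    have h4 := bnd_decomp p n hj1
    omega

lemma ngb_true_of {j t : ℕ} (hj1 : 1 ≤ j) (hjJ : j ≤ J)
    (h1 : bnd p n (j-1) + p j < t) (h2 : t ≤ bnd p n j) :
    ngb p n J t = true := by
  rw [ngb_true_iff]
  exact ⟨j, hj1, hjJ, h1, h2⟩

lemma cover : ∀ j t, 1 ≤ t → t ≤ bnd p n j →
    ∃ j', 1 ≤ j' ∧ j' ≤ j ∧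
      ((bnd p n (j'-1) < t ∧ t ≤ bnd p n (j'-1) + p j') ∨
       (bnd p n (j'-1) + p j' < t ∧ t ≤ bnd p n j')) := by
  intro j
  induction j with
  | zero => intro t h1 h2; rw [bnd] at h2; omega
  | succ j ih =>
    intro t h1 h2
    rcases le_or_gt t (bnd p n j) with h | h
    · obtain ⟨j', a, b, c⟩ := ih t h1 h
      exact ⟨j', a, by omega, c⟩
    · refine ⟨j+1, by omega, le_refl _, ?_⟩
      rw [bnd] at h2
      simp only [Nat.add_sub_cancel]
      have e : bnd p n (j+1) = bnd p n j + p (j+1) + n (j+1) := rfl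
      omega

local notation "SH" => Shat Δt ρ ηC ηD Slb PC PD Sinit p n

lemma blockP (hΔt : 0 < Δt) (hρ0 : 0 < ρ) (hρ1 : ρ ≤ 1)
    (hηC0 : 0 < ηC) (hηD0 : 0 < ηD) (hη : ηC * ηD ≤ 1)
    (hPD : 0 ≤ PD) (hPC : 0 ≤ PC) (hS0 : 0 ≤ Slb) (hinit0 : Slb ≤ Sinit)
    (hs0 : s 0 = Sinit)
    (hsrec : ∀ t ∈ Icc 1 T, s t = ρ * s (t-1) + Δt * (ηC * pc t - (1/ηD) * pd t))
    (hsb : ∀ t ∈ Icc 1 T, Slb ≤ s t ∧ s t ≤ Sub)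
    (hpcb : ∀ t ∈ Icc 1 T, 0 ≤ pc t ∧ pc t ≤ PC)
    (hpdb : ∀ t ∈ Icc 1 T, 0 ≤ pd t ∧ pd t ≤ PD)
    (hTJ : bnd p n J = T)
    (hngP : ∀ j t, 1 ≤ j → j ≤ J → bnd p n (j-1) < t → t ≤ bnd p n (j-1) + p j →
      ng t = false)
    {j : ℕ} (hj1 : 1 ≤ j) (hjJ : j ≤ J)
    (hprev : SS (bnd p n (j-1)) ≤ max (SH (j-1)) (W (bnd p n (j-1)))) :
    ∀ k, k ≤ p j → SS (bnd p n (j-1) + k) ≤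
      max (max (ρ^k * SH (j-1) - (Δt*PD/ηD) * ∑ i ∈ range k, ρ^i) Slb)
        (W (bnd p n (j-1) + k)) := by
  have hd0 : 0 ≤ Δt * PD / ηD := by positivity
  intro k
  induction k with
  | zero =>
    intro _
    simpa using le_trans hprev (max_le_max (le_max_left _ _) le_rfl)
  | succ k ih =>
    intro hk
    have hM := ih (by omega)
    set b := bnd p n (j-1) with hb
    have hble : bnd p n j ≤ T := hTJ ▸ bnd_mono p n hjJ
    have hdec := bnd_decomp p n hj1
    have htT : b + (k+1) ≤ T := by omega
    have hng' : ng (b + k + 1) = false := hngP j (b+k+1) hj1 hjJ (by omega) (by omega)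
    have hmem : b + k + 1 ∈ Icc 1 T := by simp; omega
    show ssf Δt ρ ηC ηD Slb Sinit PC PD T ng pc pd ((b+k)+1) ≤ _
    rw [ssf]
    simp only [hng', Bool.false_eq_true, if_false]
    apply max_le
    · have h5 : ρ * SS (b+k) - Δt*PD/ηD ≤
          ρ * max (max (ρ^k * SH (j-1) - (Δt*PD/ηD) * ∑ i ∈ range k, ρ^i) Slb) (W (b+k))
            - Δt*PD/ηD := by
        have := mul_le_mul_of_nonneg_left hM hρ0.le
        linarith
      rw [mul_max_of_nonneg _ _ hρ0.le, mul_max_of_nonneg _ _ hρ0.le,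
        ← max_sub_sub_right, ← max_sub_sub_right] at h5
      have hb1 : ρ * (ρ^k * SH (j-1) - (Δt*PD/ηD) * ∑ i ∈ range k, ρ^i) - Δt*PD/ηD =
          ρ^(k+1) * SH (j-1) - (Δt*PD/ηD) * ∑ i ∈ range (k+1), ρ^i := by
        rw [pow_succ, geom_sum_succ]
        ring
      have hb2 : ρ * Slb - Δt*PD/ηD ≤ Slb := by nlinarith
      have hb3 : ρ * W (b+k) - Δt*PD/ηD ≤ max Slb (W (b+k+1)) := by
        have hup := Wf_step_upper Δt ρ ηC ηD Slb PC T ng pc pd hρ0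
          (show b + k < T by omega)
        have hnegd := fmx_ge_negd Δt ηC ηD PC PD ng pc pd hΔt hηC0 hηD0 hPD hPC
          (hpcb _ hmem).1 (hpdb _ hmem).2
        rcases max_cases (ρ*Slb) (W (b+k+1) - FM (b+k+1)) with ⟨he,_⟩|⟨he,_⟩ <;>
          rw [he] at hup
        · have : ρ * W (b+k) - Δt*PD/ηD ≤ Slb := by nlinarith
          exact le_trans this (le_max_left _ _)
        · have : ρ * W (b+k) - Δt*PD/ηD ≤ W (b+k+1) := by
            have := hnegd
            linarith
          exact le_trans this (le_max_right _ _)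
      refine le_trans h5 (max_le (max_le ?_ ?_) ?_)
      · rw [hb1]
        exact le_trans (le_max_left _ _) (le_max_left _ _)
      · exact le_trans (le_trans hb2 (le_max_right _ _)) (le_max_left _ _)
      · refine le_trans hb3 (max_le ?_ ?_)
        · exact le_trans (le_max_right _ _) (le_max_left _ _)
        · exact le_max_right _ _
    · exact le_max_right _ _

lemma blockN (hΔt : 0 < Δt) (hρ0 : 0 < ρ) (hρ1 : ρ ≤ 1)
    (hηC0 : 0 < ηC) (hηD0 : 0 < ηD) (hη : ηC * ηD ≤ 1)
    (hPD : 0 ≤ PD) (hPC : 0 ≤ PC) (hS0 : 0 ≤ Slb) (hSlbSub : Slb ≤ Sub)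
    (hleak : (1-ρ) * Sub ≤ Δt * ηC * PC) (hinit0 : Slb ≤ Sinit)
    (hs0 : s 0 = Sinit)
    (hsrec : ∀ t ∈ Icc 1 T, s t = ρ * s (t-1) + Δt * (ηC * pc t - (1/ηD) * pd t))
    (hsb : ∀ t ∈ Icc 1 T, Slb ≤ s t ∧ s t ≤ Sub)
    (hpcb : ∀ t ∈ Icc 1 T, 0 ≤ pc t ∧ pc t ≤ PC)
    (hpdb : ∀ t ∈ Icc 1 T, 0 ≤ pd t ∧ pd t ≤ PD)
    (hTJ : bnd p n J = T)
    (hngN : ∀ j t, 1 ≤ j → j ≤ J → bnd p n (j-1) + p j < t → t ≤ bnd p n j →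
      ng t = true)
    {j : ℕ} (hj1 : 1 ≤ j) (hjJ : j ≤ J) {u0 : ℝ} (hu0l : Slb ≤ u0)
    (hstart : SS (bnd p n (j-1) + p j) ≤ max u0 (W (bnd p n (j-1) + p j))) :
    ∀ k, k ≤ n j → SS (bnd p n (j-1) + p j + k) ≤
      max (ρ^k * u0 + (Δt*ηC*PC) * ∑ i ∈ range k, ρ^i)
        (W (bnd p n (j-1) + p j + k)) := by
  have hc0 : 0 ≤ Δt * ηC * PC := by positivity
  have hcSlb : (1-ρ) * Slb ≤ Δt*ηC*PC := le_trans (by nlinarith) hleak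
  intro k
  induction k with
  | zero =>
    intro _
    simpa using hstart
  | succ k ih =>
    intro hk
    have hM := ih (by omega)
    set b := bnd p n (j-1) + p j with hb
    have hble : bnd p n j ≤ T := hTJ ▸ bnd_mono p n hjJ
    have hdec := bnd_decomp p n hj1
    have htT : b + (k+1) ≤ T := by omega
    have hng' : ng (b + k + 1) = true := hngN j (b+k+1) hj1 hjJ (by omega) (by omega)
    have hmem : b + k + 1 ∈ Icc 1 T := by simp; omega
    have hfmc : FM (b+k+1) = Δt * ηC * PC := by rw [fmx, if_pos hng']
    have huk : Slb ≤ ρ^k * u0 + (Δt*ηC*PC) * ∑ i ∈ range k, ρ^i :=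
      lift_ge_Slb (Δt := Δt) (ρ := ρ) (ηC := ηC) (Slb := Slb) (PC := PC)
        hρ0 hρ1 hS0 hcSlb hu0l k
    have hukk : ρ^(k+1) * u0 + (Δt*ηC*PC) * ∑ i ∈ range (k+1), ρ^i =
        ρ * (ρ^k * u0 + (Δt*ηC*PC) * ∑ i ∈ range k, ρ^i) + Δt*ηC*PC := by
      rw [pow_succ, geom_sum_succ]
      ring
    -- bound ρ * W (b+k) + c
    have hWb : ρ * W (b+k) + Δt*ηC*PC ≤
        max (ρ^(k+1) * u0 + (Δt*ηC*PC) * ∑ i ∈ range (k+1), ρ^i) (W (b+k+1)) := by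
      have hup := Wf_step_upper Δt ρ ηC ηD Slb PC T ng pc pd hρ0
        (show b + k < T by omega)
      rcases max_cases (ρ*Slb) (W (b+k+1) - FM (b+k+1)) with ⟨he,_⟩|⟨he,_⟩ <;>
        rw [he] at hup
      · have h1 : ρ * W (b+k) + Δt*ηC*PC ≤ ρ*Slb + Δt*ηC*PC := by linarith
        have h2 : ρ*Slb + Δt*ηC*PC ≤ ρ^(k+1) * u0 + (Δt*ηC*PC) * ∑ i ∈ range (k+1), ρ^i := by
          rw [hukk]
          nlinarith [huk]
        exact le_trans (le_trans h1 h2) (le_max_left _ _)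
      · have h1 : ρ * W (b+k) + Δt*ηC*PC ≤ W (b+k+1) := by
          rw [hfmc] at hup
          linarith
        exact le_trans h1 (le_max_right _ _)
    have hmul := mul_le_mul_of_nonneg_left hM hρ0.le
    rw [mul_max_of_nonneg _ _ hρ0.le] at hmul
    have harg1 : Δt * ηC * (pc (b+k+1) - pd (b+k+1)) ≤ Δt * ηC * PC := by
      have h3 := (hpcb _ hmem).2
      have h4 := (hpdb _ hmem).1
      nlinarith [mul_pos hΔt hηC0]
    show ssf Δt ρ ηC ηD Slb Sinit PC PD T ng pc pd ((b+k)+1) ≤ _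
    rw [ssf]
    simp only [hng', if_pos]
    apply max_le (max_le ?_ ?_) ?_
    · -- ρ SS + ΔtηC(pc−pd)
      have h6 : ρ * SS (b+k) + Δt * ηC * (pc (b+k+1) - pd (b+k+1)) ≤
          max (ρ * (ρ^k * u0 + (Δt*ηC*PC) * ∑ i ∈ range k, ρ^i)) (ρ * W (b+k))
            + Δt*ηC*PC := by linarith
      refine le_trans h6 ?_
      rcases max_cases (ρ * (ρ^k * u0 + (Δt*ηC*PC) * ∑ i ∈ range k, ρ^i)) (ρ * W (b+k))
        with ⟨he,_⟩|⟨he,_⟩ <;> rw [he]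
      · rw [← hukk]
        exact le_max_left _ _
      · exact hWb
    · exact le_max_right _ _
    · -- ρ SS
      have h6 : ρ * SS (b+k) ≤
          max (ρ * (ρ^k * u0 + (Δt*ηC*PC) * ∑ i ∈ range k, ρ^i)) (ρ * W (b+k))
            + Δt*ηC*PC := by
        rcases le_total (ρ * (ρ^k * u0 + (Δt*ηC*PC) * ∑ i ∈ range k, ρ^i)) (ρ * W (b+k))
          with h|h
        · rw [max_eq_right h] at hmul ⊢; linarith
        · rw [max_eq_left h] at hmul ⊢; linarith
      refine le_trans h6 ?_
      rcases max_cases (ρ * (ρ^k * u0 + (Δt*ηC*PC) * ∑ i ∈ range k, ρ^i)) (ρ * W (b+k))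
        with ⟨he,_⟩|⟨he,_⟩ <;> rw [he]
      · rw [← hukk]
        exact le_max_left _ _
      · exact hWb

lemma Wf_le_Sub (hΔt : 0 < Δt) (hρ0 : 0 < ρ) (hηC0 : 0 < ηC) (hηD0 : 0 < ηD)
    (hη : ηC * ηD ≤ 1) (hinit0 : Slb ≤ Sinit) (hinit1 : Sinit ≤ Sub)
    (hs0 : s 0 = Sinit)
    (hsrec : ∀ t ∈ Icc 1 T, s t = ρ * s (t-1) + Δt * (ηC * pc t - (1/ηD) * pd t))
    (hsb : ∀ t ∈ Icc 1 T, Slb ≤ s t ∧ s t ≤ Sub)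
    (hpcb : ∀ t ∈ Icc 1 T, 0 ≤ pc t ∧ pc t ≤ PC)
    (hpdb : ∀ t ∈ Icc 1 T, 0 ≤ pd t ∧ pd t ≤ PD) :
    ∀ t, t ≤ T → W t ≤ Sub := by
  intro t ht
  have h1 := Wf_le_s Δt ρ ηC ηD Slb Sub Sinit PC PD T ng pc pd s hΔt hρ0 hηC0 hηD0 hη
    hinit0 hs0 hsrec hsb hpcb hpdb t ht
  rcases Nat.eq_zero_or_pos t with h|h
  · subst h; rw [hs0] at h1; linarith
  · exact le_trans h1 (hsb t (by simp; omega)).2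

lemma globalSub (hΔt : 0 < Δt) (hρ0 : 0 < ρ) (hρ1 : ρ ≤ 1)
    (hηC0 : 0 < ηC) (hηD0 : 0 < ηD) (hη : ηC * ηD ≤ 1)
    (hPD : 0 ≤ PD) (hPC : 0 ≤ PC) (hS0 : 0 ≤ Slb) (hSlbSub : Slb ≤ Sub)
    (hleak : (1-ρ) * Sub ≤ Δt * ηC * PC)
    (hinit0 : Slb ≤ Sinit) (hinit1 : Sinit ≤ Sub)
    (hs0 : s 0 = Sinit)
    (hsrec : ∀ t ∈ Icc 1 T, s t = ρ * s (t-1) + Δt * (ηC * pc t - (1/ηD) * pd t))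
    (hsb : ∀ t ∈ Icc 1 T, Slb ≤ s t ∧ s t ≤ Sub)
    (hpcb : ∀ t ∈ Icc 1 T, 0 ≤ pc t ∧ pc t ≤ PC)
    (hpdb : ∀ t ∈ Icc 1 T, 0 ≤ pd t ∧ pd t ≤ PD)
    (hTJ : bnd p n J = T)
    (hngP : ∀ j t, 1 ≤ j → j ≤ J → bnd p n (j-1) < t → t ≤ bnd p n (j-1) + p j →
      ng t = false)
    (hngN : ∀ j t, 1 ≤ j → j ≤ J → bnd p n (j-1) + p j < t → t ≤ bnd p n j →
      ng t = true)
    (hShatSub : ∀ j, 1 ≤ j → j ≤ J → SH j ≤ Sub) :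
    ∀ j, j ≤ J → (SS (bnd p n j) ≤ max (SH j) (W (bnd p n j))) ∧
      (∀ t, 1 ≤ t → t ≤ bnd p n j → SS t ≤ Sub) := by
  have hcSlb : (1-ρ) * Slb ≤ Δt*ηC*PC := le_trans (by nlinarith) hleak
  have hc0 : 0 ≤ Δt * ηC * PC := by positivity
  have hd0 : 0 ≤ Δt * PD / ηD := by positivity
  have hWSub := Wf_le_Sub Δt ρ ηC ηD Slb Sub Sinit PC PD T ng pc pd s hΔt hρ0 hηC0 hηD0 hη
    hinit0 hinit1 hs0 hsrec hsb hpcb hpdb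
  intro j
  induction j with
  | zero =>
    intro _
    constructor
    · show SS 0 ≤ _
      rw [ssf]
      exact le_trans (le_of_eq rfl) (le_max_left _ _)
    · intro t h1 h2
      rw [show bnd p n 0 = 0 from rfl] at h2
      omega
  | succ j ih =>
    intro hjJ
    obtain ⟨hprev, hIH2⟩ := ih (by omega)
    have hj1 : 1 ≤ j + 1 := by omega
    have hjm : (j+1) - 1 = j := by omega
    have hSHj_Sub : SH j ≤ Sub := by
      rcases Nat.eq_zero_or_pos j with h|h
      · rw [h]; exact hinit1
      · exact hShatSub j (by omega) (by omega)
    have hSHj_l : Slb ≤ SH j :=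
      Shat_ge_Slb Δt ρ ηC ηD Slb Sinit PC PD p n hρ0 hρ1 hS0 hcSlb hinit0 j
    have hprev' : SS (bnd p n ((j+1)-1)) ≤ max (SH ((j+1)-1)) (W (bnd p n ((j+1)-1))) := by
      rw [hjm]; exact hprev
    have hP := blockP Δt ρ ηC ηD Slb Sub Sinit PC PD T ng pc pd s p n J hΔt hρ0 hρ1 hηC0
      hηD0 hη hPD hPC hS0 hinit0 hs0 hsrec hsb hpcb hpdb hTJ hngP hj1 hjJ hprev'
    rw [hjm] at hP
    -- envelope bound within the positive part
    have hek : ∀ k : ℕ, ρ^k * SH j - (Δt*PD/ηD) * ∑ i ∈ range k, ρ^i ≤ Sub := by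
      intro k
      have h1 : ρ^k * SH j ≤ SH j := by
        have h2 : ρ^k ≤ 1 := pow_le_one₀ hρ0.le hρ1
        have h3 : 0 ≤ SH j := le_trans hS0 hSHj_l
        nlinarith
      have h4 : 0 ≤ (Δt*PD/ηD) * ∑ i ∈ range k, ρ^i :=
        mul_nonneg hd0 (gs_nonneg ρ hρ0 k)
      linarith
    have hu0l : Slb ≤ max (ρ^(p (j+1)) * SH j -
        (Δt*PD/ηD) * ∑ i ∈ range (p (j+1)), ρ^i) Slb := le_max_right _ _
    have hu0Sub : max (ρ^(p (j+1)) * SH j -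
        (Δt*PD/ηD) * ∑ i ∈ range (p (j+1)), ρ^i) Slb ≤ Sub :=
      max_le (hek _) hSlbSub
    have hstart := hP (p (j+1)) le_rfl
    have hprevP : bnd p n ((j+1)-1) = bnd p n j := by rw [hjm]
    have hN := blockN Δt ρ ηC ηD Slb Sub Sinit PC PD T ng pc pd s p n J hΔt hρ0 hρ1 hηC0
      hηD0 hη hPD hPC hS0 hSlbSub hleak hinit0 hs0 hsrec hsb hpcb hpdb hTJ hngN hj1 hjJ
      hu0l (by rw [hjm]; exact hstart)
    rw [hjm] at hN
    have hdecs : bnd p n (j+1) = bnd p n j + p (j+1) + n (j+1) := rfl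
    have hq : (1-ρ) * max (ρ^(p (j+1)) * SH j -
        (Δt*PD/ηD) * ∑ i ∈ range (p (j+1)), ρ^i) Slb ≤ Δt*ηC*PC := by
      nlinarith [hu0Sub]
    have hSH_eq : SH (j+1) =
        ρ^(n (j+1)) * max (ρ^(p (j+1)) * SH j -
          (Δt*PD/ηD) * ∑ i ∈ range (p (j+1)), ρ^i) Slb +
        (Δt*ηC*PC) * ∑ i ∈ range (n (j+1)), ρ^i :=
      Shat_succ Δt ρ ηC ηD Slb Sinit PC PD p n j
    constructor
    · have := hN (n (j+1)) le_rfl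
      rw [← hdecs] at this
      rw [hSH_eq]
      exact this
    · intro t h1 h2
      rcases le_or_gt t (bnd p n j) with h|h
      · exact hIH2 t h1 h
      · have hble : bnd p n (j+1) ≤ T := hTJ ▸ bnd_mono p n hjJ
        rcases le_or_gt t (bnd p n j + p (j+1)) with hcase|hcase
        · have hk := hP (t - bnd p n j) (by omega)
          rw [show bnd p n j + (t - bnd p n j) = t from by omega] at hk
          refine le_trans hk (max_le (max_le ?_ hSlbSub) ?_)
          · exact hek _
          · exact hWSub t (by omega)
        · have hk := hN (t - (bnd p n j + p (j+1))) (by omega)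
          rw [show bnd p n j + p (j+1) + (t - (bnd p n j + p (j+1))) = t from by omega] at hk
          refine le_trans hk (max_le ?_ ?_)
          · -- u_k ≤ u_{n (j+1)} = SH (j+1) ≤ Sub
            have hmon := u_mono (ρ := ρ) hρ0 hρ1 hc0 hq
              (show t - (bnd p n j + p (j+1)) ≤ n (j+1) by omega)
            rw [← hSH_eq] at hmon
            exact le_trans hmon (hShatSub (j+1) (by omega) hjJ)
          · exact hWSub t (by omega)

end A

lemma stf_cont (Δt ρ ηC ηD Sinit : ℝ) (t : ℕ) :
    Continuous (fun z : (ℕ → ℝ) × (ℕ → ℝ) => stf Δt ρ ηC ηD Sinit z.1 z.2 t) := by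
  induction t with
  | zero =>
    simp only [stf]
    exact continuous_const
  | succ t ih =>
    simp only [stf]
    exact (continuous_const.mul ih).add (continuous_const.mul
      ((continuous_const.mul ((continuous_apply (t+1)).comp continuous_fst)).sub
       (continuous_const.mul ((continuous_apply (t+1)).comp continuous_snd))))

lemma exists_opt (T : ℕ) (Δt ρ ηC ηD Slb Sub Sinit PC PD : ℝ) (C : ℕ → ℝ)
    (hΔt : 0 < Δt) (hρ0 : 0 < ρ) (hρ1 : ρ ≤ 1)
    (hηC0 : 0 < ηC) (hηD0 : 0 < ηD)
    (hS0 : 0 ≤ Slb) (hSlbSub : Slb ≤ Sub) (hPC : 0 < PC) (hPD : 0 < PD)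
    (hinit0 : Slb ≤ Sinit) (hinit1 : Sinit ≤ Sub)
    (hleak : (1 - ρ) * Sub ≤ Δt * ηC * PC) :
    ∃ s pC pD : ℕ → ℝ,
      optimal T Δt ρ ηC ηD Slb Sub Sinit PC PD C s pC pD := by
  classical
  set st : (ℕ → ℝ) × (ℕ → ℝ) → ℕ → ℝ := fun z => stf Δt ρ ηC ηD Sinit z.1 z.2 with hst
  set B : Set ((ℕ → ℝ) × (ℕ → ℝ)) :=
    {z | ∀ t ∈ Icc 1 T, st z t ∈ Set.Icc Slb Sub} with hB
  set K : Set ((ℕ → ℝ) × (ℕ → ℝ)) :=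
    ((Set.univ.pi fun _ : ℕ => Set.Icc (0:ℝ) PC) ×ˢ
     (Set.univ.pi fun _ : ℕ => Set.Icc (0:ℝ) PD)) ∩ B with hK
  have hKmem : ∀ z, z ∈ K ↔ ((∀ t, 0 ≤ z.1 t ∧ z.1 t ≤ PC) ∧ (∀ t, 0 ≤ z.2 t ∧ z.2 t ≤ PD)
      ∧ ∀ t ∈ Icc 1 T, Slb ≤ st z t ∧ st z t ≤ Sub) := by
    intro z
    simp only [hK, hB, Set.mem_inter_iff, Set.mem_prod, Set.mem_univ_pi, Set.mem_Icc,
      Set.mem_setOf_eq]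
    tauto
  have hBclosed : IsClosed B := by
    have : B = ⋂ t ∈ Icc 1 T, (fun z => st z t) ⁻¹' (Set.Icc Slb Sub) := by
      ext z
      simp [hB]
    rw [this]
    exact isClosed_biInter fun t _ => IsClosed.preimage (stf_cont Δt ρ ηC ηD Sinit t)
      isClosed_Icc
  have hKc : IsCompact K :=
    (((isCompact_univ_pi fun _ => isCompact_Icc).prod
      (isCompact_univ_pi fun _ => isCompact_Icc))).inter_right hBclosed
  -- nonempty
  have hSinit0 : 0 ≤ Sinit := le_trans hS0 hinit0
  set q : ℝ := (1 - ρ) * Sinit / (Δt * ηC) with hq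
  have hq0 : 0 ≤ q := by
    apply div_nonneg _ (by positivity)
    nlinarith
  have hqPC : q ≤ PC := by
    rw [hq, div_le_iff₀ (by positivity)]
    nlinarith
  set z₀ : (ℕ → ℝ) × (ℕ → ℝ) := (fun _ => q, fun _ => 0) with hz₀
  have hstz₀ : ∀ t, st z₀ t = Sinit := by
    intro t
    induction t with
    | zero => rfl
    | succ t ih =>
      show ρ * st z₀ t + Δt * (ηC * q - (1/ηD) * 0) = Sinit
      rw [ih, hq]
      field_simp
      ring
  have hne : K.Nonempty := by
    refine ⟨z₀, (hKmem z₀).2 ⟨fun t => ⟨hq0, hqPC⟩, fun t => ⟨le_refl 0, hPD.le⟩, ?_⟩⟩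
    intro t _
    rw [hstz₀ t]
    exact ⟨hinit0, hinit1⟩
  -- continuous objective
  set f : (ℕ → ℝ) × (ℕ → ℝ) → ℝ := fun z => ∑ t ∈ Icc 1 T, Δt * C t * (z.2 t - z.1 t) with hf
  have hfc : Continuous f := by
    apply continuous_finset_sum
    intro t _
    exact Continuous.mul continuous_const
      (((continuous_apply t).comp continuous_snd).sub
       ((continuous_apply t).comp continuous_fst))
  obtain ⟨z, hzK, hzmax⟩ := hKc.exists_isMaxOn hne hfc.continuousOn
  obtain ⟨hz1, hz2, hz3⟩ := (hKmem z).1 hzK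
  refine ⟨st z, z.1, z.2, ?_, ?_⟩
  · refine ⟨rfl, ?_, fun t ht => hz3 t ht, fun t _ => hz1 t, fun t _ => hz2 t⟩
    intro t ht
    simp only [mem_Icc] at ht
    obtain ⟨k, rfl⟩ : ∃ k, t = k + 1 := ⟨t - 1, by omega⟩
    show stf Δt ρ ηC ηD Sinit z.1 z.2 (k+1) = _
    rw [stf]
    simp
    exact Or.inl rfl
  · intro s' pC' pD' hfeas
    obtain ⟨h0, hrec, hsb', hcb', hdb'⟩ := hfeas
    set z' : (ℕ → ℝ) × (ℕ → ℝ) :=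
      (fun t => if t ∈ Icc 1 T then pC' t else 0, fun t => if t ∈ Icc 1 T then pD' t else 0)
      with hz'
    have hst' : ∀ t, t ≤ T → st z' t = s' t := by
      intro t
      induction t with
      | zero => intro _; rw [h0]; rfl
      | succ t ih =>
        intro hle
        have hmem : t + 1 ∈ Icc 1 T := by simp; omega
        show ρ * st z' t + Δt * (ηC * z'.1 (t+1) - (1/ηD) * z'.2 (t+1)) = s' (t+1)
        have hz'1 : z'.1 (t+1) = pC' (t+1) := by simp only [hz', if_pos hmem]
        have hz'2 : z'.2 (t+1) = pD' (t+1) := by simp only [hz', if_pos hmem]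
        rw [hz'1, hz'2, ih (by omega), hrec (t+1) hmem]
        simp
    have hz'K : z' ∈ K := by
      refine (hKmem z').2 ⟨?_, ?_, ?_⟩
      · intro t
        by_cases h : t ∈ Icc 1 T
        · simp only [hz', h, if_pos]
          exact hcb' t h
        · simp only [hz', h, if_neg, if_false]
          exact ⟨le_refl 0, hPC.le⟩
      · intro t
        by_cases h : t ∈ Icc 1 T
        · simp only [hz', h, if_pos]
          exact hdb' t h
        · simp only [hz', h, if_neg, if_false]
          exact ⟨le_refl 0, hPD.le⟩
      · intro t ht
        have htT : t ≤ T := by simp at ht; omega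
        rw [hst' t htT]
        exact hsb' t ht
    have hobj : objective T Δt C pC' pD' = f z' := by
      apply Finset.sum_congr rfl
      intro t ht
      simp [hz', Finset.mem_Icc.1 ht]
    have := hzmax hz'K
    rw [hobj]
    exact this


theorem stmt15 (T J : ℕ) (p n : ℕ → ℕ) (Δt ρ ηC ηD Slb Sub Sinit PC PD : ℝ)
    (C : ℕ → ℝ)
    (hΔt : 0 < Δt) (hρ0 : 0 < ρ) (hρ1 : ρ ≤ 1)
    (hηC0 : 0 < ηC) (hηC1 : ηC ≤ 1) (hηD0 : 0 < ηD) (hηD1 : ηD ≤ 1)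
    (hη : ηC * ηD < 1)
    (hS0 : 0 ≤ Slb) (hS : Slb < Sub) (hPC : 0 < PC) (hPD : 0 < PD)
    (hinit0 : Slb ≤ Sinit) (hinit1 : Sinit ≤ Sub)
    (hleak : (1 - ρ) * Sub ≤ Δt * ηC * PC)
    (hT : T = bnd p n J)
    (hpos : ∀ j ∈ Icc 1 J, ∀ t : ℕ,
      bnd p n (j - 1) < t → t ≤ bnd p n (j - 1) + p j → 0 ≤ C t)
    (hneg : ∀ j ∈ Icc 1 J, ∀ t : ℕ,
      bnd p n (j - 1) + p j < t → t ≤ bnd p n j → C t < 0)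
    (hShat : ∀ j ∈ Icc 1 J, Shat Δt ρ ηC ηD Slb PC PD Sinit p n j ≤ Sub) :
    ∃ s pC pD : ℕ → ℝ,
      optimal T Δt ρ ηC ηD Slb Sub Sinit PC PD C s pC pD ∧
      ∀ t ∈ Icc 1 T, pC t * pD t = 0 := by
  classical
  obtain ⟨s0, pc0, pd0, hopt⟩ := exists_opt T Δt ρ ηC ηD Slb Sub Sinit PC PD C
    hΔt hρ0 hρ1 hηC0 hηD0 hS0 hS.le hPC hPD hinit0 hinit1 hleak
  obtain ⟨hfeas0, hbest0⟩ := hopt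
  obtain ⟨hs00, hsrec0, hsb0, hpcb0, hpdb0⟩ := hfeas0
  set ngx : ℕ → Bool := ngb p n J with hngx
  have hTJ : bnd p n J = T := hT.symm
  have hηle : ηC * ηD ≤ 1 := hη.le
  have hngP : ∀ j t, 1 ≤ j → j ≤ J → bnd p n (j-1) < t → t ≤ bnd p n (j-1) + p j →
      ngx t = false := fun j t a b c d => ngb_false_of p n J a b c d
  have hngN : ∀ j t, 1 ≤ j → j ≤ J → bnd p n (j-1) + p j < t → t ≤ bnd p n j →
      ngx t = true := fun j t a b c d => ngb_true_of p n J a b c d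
  have hShatSub : ∀ j, 1 ≤ j → j ≤ J →
      Shat Δt ρ ηC ηD Slb PC PD Sinit p n j ≤ Sub :=
    fun j a b => hShat j (Finset.mem_Icc.2 ⟨a, b⟩)
  set sW := ssf Δt ρ ηC ηD Slb Sinit PC PD T ngx pc0 pd0 with hsW
  set pCW := pCn Δt ρ ηC ηD Slb Sinit PC PD T ngx pc0 pd0 with hpCW
  set pDW := pDn Δt ρ ηC ηD Slb Sinit PC PD T ngx pc0 pd0 with hpDW
  have hglob := globalSub Δt ρ ηC ηD Slb Sub Sinit PC PD T ngx pc0 pd0 s0 p n J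
    hΔt hρ0 hρ1 hηC0 hηD0 hηle hPD.le hPC.le hS0 hS.le hleak hinit0 hinit1
    hs00 hsrec0 hsb0 hpcb0 hpdb0 hTJ hngP hngN hShatSub J le_rfl
  -- pointwise bounds on F
  have hFbox : ∀ t : ℕ, 1 ≤ t → t ≤ T →
      Ffn Δt ρ ηC ηD Slb Sinit PC PD T ngx pc0 pd0 t ≤ Δt * ηC * PC ∧
      -(Δt * PD / ηD) ≤ Ffn Δt ρ ηC ηD Slb Sinit PC PD T ngx pc0 pd0 t := by
    intro t h1 h2
    obtain ⟨k, rfl⟩ : ∃ k, t = k + 1 := ⟨t - 1, by omega⟩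
    have hmem : k + 1 ∈ Icc 1 T := by simp; omega
    constructor
    · refine le_trans (F_le_fm Δt ρ ηC ηD Slb Sub Sinit PC PD T ngx pc0 pd0 s0 hΔt hρ0
        hηC0 hηD0 hηle hPD.le hPC.le hinit0 hs00 hsrec0 hsb0 hpcb0 hpdb0 h2) ?_
      exact fmx_le_c Δt ηC ηD PC ngx pc0 pd0 hΔt hηC0 hηD0 hPC.le
        (hpcb0 _ hmem).2 (hpdb0 _ hmem).1
    · exact F_ge_negd Δt ρ ηC ηD Slb Sinit PC PD T ngx pc0 pd0 hΔt hηD0 hPD.le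
  have hfeasW : feasible T Δt ρ ηC ηD Slb Sub Sinit PC PD sW pCW pDW := by
    refine ⟨rfl, ?_, ?_, ?_, ?_⟩
    · intro t ht
      simp only [mem_Icc] at ht
      obtain ⟨k, rfl⟩ : ∃ k, t = k + 1 := ⟨t - 1, by omega⟩
      have := ss_rec Δt ρ ηC ηD Slb Sinit PC PD T ngx pc0 pd0 hΔt hηC0 hηD0 k
      simpa using this
    · intro t ht
      simp only [mem_Icc] at ht
      constructor
      · exact ss_ge_Slb Δt ρ ηC ηD Slb Sinit PC PD T ngx pc0 pd0 t ht.1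
      · exact hglob.2 t ht.1 (by omega)
    · intro t ht
      simp only [mem_Icc] at ht
      constructor
      · exact pCn_nonneg Δt ρ ηC ηD Slb Sinit PC PD T ngx pc0 pd0 hΔt hηC0 t
      · exact pCn_le Δt ρ ηC ηD Slb Sinit PC PD T ngx pc0 pd0 hΔt hηC0 hPC.le
          (hFbox t ht.1 ht.2).1
    · intro t ht
      simp only [mem_Icc] at ht
      constructor
      · exact pDn_nonneg Δt ρ ηC ηD Slb Sinit PC PD T ngx pc0 pd0 hΔt hηD0 t
      · exact pDn_le Δt ρ ηC ηD Slb Sinit PC PD T ngx pc0 pd0 hΔt hηD0 hPD.le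
          (hFbox t ht.1 ht.2).2
  have hcompare : objective T Δt C pc0 pd0 ≤ objective T Δt C pCW pDW := by
    apply Finset.sum_le_sum
    intro t ht
    simp only [mem_Icc] at ht
    obtain ⟨k, rfl⟩ : ∃ k, t = k + 1 := ⟨t - 1, by omega⟩
    rcases hcls : ngx (k+1) with _ | _
    · -- positive-price time
      obtain ⟨j', hj'1, hj'J, hcase⟩ := cover p n J (k+1) (by omega)
        (by rw [hTJ]; omega)
      rcases hcase with hcase | hcase
      · have hC : 0 ≤ C (k+1) := hpos j' (Finset.mem_Icc.2 ⟨hj'1, hj'J⟩) (k+1)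
          hcase.1 hcase.2
        have hcmp := obj_pt_pos Δt ρ ηC ηD Slb Sub Sinit PC PD T ngx pc0 pd0 s0
          hΔt hρ0 hηC0 hηD0 hηle hPD.le hPC.le hinit0 hs00 hsrec0 hsb0 hpcb0 hpdb0
          ht.2 hcls
        have hC2 : 0 ≤ Δt * C (k+1) := by positivity
        nlinarith [mul_le_mul_of_nonneg_left hcmp hC2]
      · exfalso
        have := hngN j' (k+1) hj'1 hj'J hcase.1 hcase.2
        rw [hcls] at this
        exact Bool.false_ne_true this
    · -- negative-price time
      obtain ⟨j', hj'1, hj'J, hA, hB⟩ := (ngb_true_iff p n J (k+1)).1 hcls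
      have hC : C (k+1) < 0 := hneg j' (Finset.mem_Icc.2 ⟨hj'1, hj'J⟩) (k+1) hA hB
      have hcmp := obj_pt_neg Δt ρ ηC ηD Slb Sinit PC PD T ngx pc0 pd0 hΔt hηC0 hηD0
        (t := k) hcls
      have hC2 : Δt * C (k+1) ≤ 0 := by nlinarith
      nlinarith [mul_le_mul_of_nonpos_left hcmp hC2]
  refine ⟨sW, pCW, pDW, ⟨hfeasW, ?_⟩, ?_⟩
  · intro s' pC' pD' hf
    exact le_trans (hbest0 s' pC' pD' hf) hcompare
  · intro t _
    rw [hpCW, hpDW, pCn, pDn]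
    rcases le_total (Ffn Δt ρ ηC ηD Slb Sinit PC PD T ngx pc0 pd0 t) 0 with h|h
    · rw [max_eq_right h]
      simp
    · rw [max_eq_right (by linarith : -(Ffn Δt ρ ηC ηD Slb Sinit PC PD T ngx pc0 pd0 t) ≤ 0)]
      simp
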